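/- Fix h ∈ ℝ and ρ > 0. Then ∫_{−∞}^{h} [1 − Φ(b + â) + e^{−2âb} Φ(b − â)] φ(x₀) dx₀ + 1 − Φ(h) = 1 − Φ(h+ρ)Φ(h) + (φ(h+ρ)/ρ)Φ(h) − (φ(h)e^{−2hρ}/ρ)Φ(h−ρ), where â = (h − x₀)/2 + ρ and b = (h + x₀)/2. -/

import Mathlib

open MeasureTheory Set

/-- Standard normal density. -/
noncomputable def stdGaussPDF (x : ℝ) : ℝ :=
  (Real.sqrt (2 * Real.pi))⁻¹ * Real.exp (-x ^ 2 / 2)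

/-- Standard normal c.d.f. `Φ`. -/
noncomputable def stdGaussCDF (t : ℝ) : ℝ := ∫ x in Set.Iic t, stdGaussPDF x

open Real Filter

lemma pdf_nonneg (x : ℝ) : 0 ≤ stdGaussPDF x := by
  unfold stdGaussPDF; positivity

lemma continuous_pdf : Continuous stdGaussPDF := by
  unfold stdGaussPDF
  exact continuous_const.mul (Real.continuous_exp.comp ((continuous_pow 2).neg.div_const 2))

lemma pdf_eq : stdGaussPDF = fun x => (Real.sqrt (2 * Real.pi))⁻¹ * rexp (-(1/2) * x ^ 2) := by
  funext x; unfold stdGaussPDF; congr 1; ring_nf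

lemma integrable_pdf : Integrable stdGaussPDF := by
  rw [pdf_eq]
  exact (integrable_exp_neg_mul_sq one_half_pos).const_mul _

lemma integrable_pdf_exp (k : ℝ) : Integrable (fun y => stdGaussPDF y * rexp (-k * y)) := by
  have h := ((integrable_exp_neg_mul_sq (by norm_num : (0:ℝ) < 1/2)).comp_sub_right (-k)).const_mul
    ((Real.sqrt (2 * Real.pi))⁻¹ * rexp (k ^ 2 / 2))
  refine h.congr (Filter.Eventually.of_forall fun y => ?_)
  unfold stdGaussPDF
  have e1 : rexp (-(1/2) * (y - -k) ^ 2) * rexp (k ^ 2 / 2) = rexp (-y ^ 2 / 2) * rexp (-k * y) := by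
    rw [← Real.exp_add, ← Real.exp_add]; congr 1; ring
  linear_combination (Real.sqrt (2 * Real.pi))⁻¹ * e1

lemma cdf_nonneg (t : ℝ) : 0 ≤ stdGaussCDF t :=
  setIntegral_nonneg measurableSet_Iic fun x _ => pdf_nonneg x

lemma hasDerivAt_cdf (x : ℝ) : HasDerivAt stdGaussCDF (stdGaussPDF x) x := by
  have key : ∀ t, stdGaussCDF t = (∫ u in (0:ℝ)..t, stdGaussPDF u) + stdGaussCDF 0 := by
    intro t
    have := intervalIntegral.integral_Iic_sub_Iic (μ := volume) (f := stdGaussPDF) (a := (0:ℝ)) (b := t)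
      integrable_pdf.integrableOn integrable_pdf.integrableOn
    unfold stdGaussCDF; linarith [this]
  have hd : HasDerivAt (fun t => (∫ u in (0:ℝ)..t, stdGaussPDF u) + stdGaussCDF 0)
      (stdGaussPDF x) x := by
    refine HasDerivAt.add_const (stdGaussCDF 0) ?_
    exact intervalIntegral.integral_hasDerivAt_right integrable_pdf.intervalIntegrable
      continuous_pdf.stronglyMeasurable.stronglyMeasurableAtFilter
      continuous_pdf.continuousAt
  exact hd.congr_of_eventuallyEq (Filter.Eventually.of_forall key)

lemma continuous_cdf : Continuous stdGaussCDF :=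
  continuous_iff_continuousAt.2 fun x => (hasDerivAt_cdf x).continuousAt

lemma cdf_le_exp {k : ℝ} (hk : 0 ≤ k) (t : ℝ) :
    stdGaussCDF t ≤ (∫ y, stdGaussPDF y * rexp (-k * y)) * rexp (k * t) := by
  have hint : Integrable (fun y => stdGaussPDF y * rexp (k * (t - y))) := by
    refine ((integrable_pdf_exp k).const_mul (rexp (k * t))).congr
      (Filter.Eventually.of_forall fun y => ?_)
    show rexp (k * t) * (stdGaussPDF y * rexp (-k * y)) = stdGaussPDF y * rexp (k * (t - y))
    rw [show k * (t - y) = k * t + -k * y by ring, Real.exp_add]; ring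
  have h1 : stdGaussCDF t ≤ ∫ y in Set.Iic t, stdGaussPDF y * rexp (k * (t - y)) := by
    refine setIntegral_mono_on integrable_pdf.integrableOn hint.integrableOn
      measurableSet_Iic fun y hy => ?_
    exact le_mul_of_one_le_right (pdf_nonneg y)
      (Real.one_le_exp (by nlinarith [mem_Iic.1 hy]))
  have h2 : (∫ y in Set.Iic t, stdGaussPDF y * rexp (k * (t - y)))
      ≤ ∫ y, stdGaussPDF y * rexp (k * (t - y)) := by
    refine setIntegral_le_integral hint (Filter.Eventually.of_forall fun y => ?_)
    have := pdf_nonneg y; positivity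
  have h3 : (∫ y, stdGaussPDF y * rexp (k * (t - y)))
      = (∫ y, stdGaussPDF y * rexp (-k * y)) * rexp (k * t) := by
    rw [mul_comm, ← integral_const_mul]
    congr 1; ext y
    rw [show k * (t - y) = k * t + -k * y by ring, Real.exp_add]; ring
  linarith

lemma tendsto_cdf_atBot : Tendsto stdGaussCDF atBot (nhds 0) := by
  have hb : Tendsto (fun t => (∫ y, stdGaussPDF y * rexp (-(1:ℝ) * y)) * rexp (1 * t))
      atBot (nhds 0) := by
    have := (Real.tendsto_exp_atBot).const_mul (∫ y, stdGaussPDF y * rexp (-(1:ℝ) * y))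
    simpa using this
  exact squeeze_zero cdf_nonneg (cdf_le_exp (by norm_num)) hb

/-- Explicit evaluation of the corrected diffusion approximation for `M = L`:
with `â = (h−x₀)/2 + ρ` and `b = (h+x₀)/2`,
`∫_{−∞}^h [1 − Φ(b+â) + e^{−2âb}Φ(b−â)] φ(x₀) dx₀ + 1 − Φ(h)
  = 1 − Φ(h+ρ)Φ(h) + (φ(h+ρ)/ρ)Φ(h) − (φ(h)e^{−2hρ}/ρ)Φ(h−ρ)`. -/
theorem corrected_diffusion_explicit (h ρ : ℝ) (hρ : 0 < ρ) :
    (∫ x₀ in Set.Iic h,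
        (1 - stdGaussCDF ((h + x₀) / 2 + ((h - x₀) / 2 + ρ))
          + Real.exp (-2 * ((h - x₀) / 2 + ρ) * ((h + x₀) / 2)) *
              stdGaussCDF ((h + x₀) / 2 - ((h - x₀) / 2 + ρ))) * stdGaussPDF x₀)
      + 1 - stdGaussCDF h
      = 1 - stdGaussCDF (h + ρ) * stdGaussCDF h
        + stdGaussPDF (h + ρ) / ρ * stdGaussCDF h
        - stdGaussPDF h * Real.exp (-2 * h * ρ) / ρ * stdGaussCDF (h - ρ) := by
  set c := (Real.sqrt (2 * Real.pi))⁻¹ with hc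
  set A := 1 - stdGaussCDF (h + ρ) with hA
  set B := stdGaussPDF h * rexp (-ρ * h) with hB
  set D := rexp (-ρ ^ 2 / 2) with hD
  -- pointwise rewriting of the integrand
  have hint : ∀ x : ℝ,
      (1 - stdGaussCDF ((h + x) / 2 + ((h - x) / 2 + ρ))
        + Real.exp (-2 * ((h - x) / 2 + ρ) * ((h + x) / 2)) *
            stdGaussCDF ((h + x) / 2 - ((h - x) / 2 + ρ))) * stdGaussPDF x
      = A * stdGaussPDF x + B * (rexp (-ρ * x) * stdGaussCDF (x - ρ)) := by
    intro x
    rw [show (h + x) / 2 + ((h - x) / 2 + ρ) = h + ρ by ring,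
        show (h + x) / 2 - ((h - x) / 2 + ρ) = x - ρ by ring]
    have e1 : rexp (-2 * ((h - x) / 2 + ρ) * ((h + x) / 2)) * rexp (-x ^ 2 / 2)
        = rexp (-h ^ 2 / 2) * (rexp (-ρ * h) * rexp (-ρ * x)) := by
      rw [← Real.exp_add, ← Real.exp_add, ← Real.exp_add]; congr 1; ring
    simp only [stdGaussPDF, hA, hB]
    linear_combination stdGaussCDF (x - ρ) * c * e1
  -- the key exponential identity for the derivative
  have I1 : ∀ x : ℝ, rexp (-ρ * x) * stdGaussPDF (x - ρ) = D * stdGaussPDF x := by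
    intro x
    have e1 : rexp (-ρ * x) * rexp (-(x - ρ) ^ 2 / 2) = rexp (-ρ ^ 2 / 2) * rexp (-x ^ 2 / 2) := by
      rw [← Real.exp_add, ← Real.exp_add]; congr 1; ring
    simp only [stdGaussPDF, hD]
    linear_combination c * e1
  -- antiderivative
  set F : ℝ → ℝ := fun x => A * stdGaussCDF x
      + B * (D / ρ * stdGaussCDF x - rexp (-ρ * x) * stdGaussCDF (x - ρ) / ρ) with hF
  have hderiv : ∀ x : ℝ, HasDerivAt F
      (A * stdGaussPDF x + B * (rexp (-ρ * x) * stdGaussCDF (x - ρ))) x := by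
    intro x
    have hΦ := hasDerivAt_cdf x
    have hΦs : HasDerivAt (fun x => stdGaussCDF (x - ρ)) (stdGaussPDF (x - ρ)) x := by
      have := (hasDerivAt_cdf (x - ρ)).comp x ((hasDerivAt_id x).sub_const ρ)
      rw [mul_one] at this
      exact this
    have hE : HasDerivAt (fun x => rexp (-ρ * x)) (rexp (-ρ * x) * -ρ) x := by
      have := ((hasDerivAt_id x).const_mul (-ρ)).exp
      simpa using this
    have hd := (hΦ.const_mul A).add
      ((((hΦ.const_mul (D / ρ)).sub (((hE.mul hΦs)).div_const ρ)).const_mul B))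
    refine hd.congr_deriv ?_
    symm
    linear_combination (B / ρ) * I1 x
      - B * rexp (-ρ * x) * stdGaussCDF (x - ρ) * mul_inv_cancel₀ hρ.ne'
  -- integrability of the integrand on Iic h
  set C : ℝ := (∫ y, stdGaussPDF y * rexp (-(ρ + 1) * y)) with hC
  have hCnn : 0 ≤ C := by
    refine integral_nonneg fun y => ?_
    have := pdf_nonneg y; positivity
  have hbound : ∀ x : ℝ, rexp (-ρ * x) * stdGaussCDF (x - ρ)
      ≤ C * rexp (-(ρ + 1) * ρ) * rexp x := by
    intro x
    have h1 := cdf_le_exp (k := ρ + 1) (by linarith) (x - ρ)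
    have h2 : rexp (-ρ * x) * (C * rexp ((ρ + 1) * (x - ρ))) = C * rexp (-(ρ + 1) * ρ) * rexp x := by
      rw [show C * rexp (-(ρ+1)*ρ) * rexp x = C * (rexp (-(ρ+1)*ρ) * rexp x) by ring,
        ← Real.exp_add, mul_comm (rexp (-ρ*x)), mul_assoc, ← Real.exp_add]
      congr 2; ring
    calc rexp (-ρ * x) * stdGaussCDF (x - ρ)
        ≤ rexp (-ρ * x) * (C * rexp ((ρ + 1) * (x - ρ))) :=
          mul_le_mul_of_nonneg_left h1 (Real.exp_nonneg _)
      _ = C * rexp (-(ρ + 1) * ρ) * rexp x := h2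
  have hg_int : IntegrableOn (fun x => rexp (-ρ * x) * stdGaussCDF (x - ρ)) (Set.Iic h) := by
    refine Integrable.mono' ((integrableOn_exp_Iic h).const_mul (C * rexp (-(ρ + 1) * ρ))) ?_
      (Filter.Eventually.of_forall fun x => ?_)
    · exact ((Real.continuous_exp.comp (continuous_const.mul continuous_id)).mul
        (continuous_cdf.comp (continuous_id.sub continuous_const))).aestronglyMeasurable
    · rw [Real.norm_eq_abs, abs_of_nonneg (mul_nonneg (Real.exp_nonneg _) (cdf_nonneg _))]
      exact hbound x
  have hf_int : IntegrableOn
      (fun x => A * stdGaussPDF x + B * (rexp (-ρ * x) * stdGaussCDF (x - ρ))) (Set.Iic h) :=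
    ((integrable_pdf.const_mul A).integrableOn).add (hg_int.const_mul B)
  -- limit of F at -infinity
  have t2 : Tendsto (fun x => rexp (-ρ * x) * stdGaussCDF (x - ρ)) atBot (nhds 0) := by
    have hb : Tendsto (fun x : ℝ => C * rexp (-(ρ + 1) * ρ) * rexp x) atBot (nhds 0) := by
      have := Real.tendsto_exp_atBot.const_mul (C * rexp (-(ρ + 1) * ρ))
      simpa using this
    exact squeeze_zero (fun x => mul_nonneg (Real.exp_nonneg _) (cdf_nonneg _)) hbound hb
  have t3 : Tendsto (fun x : ℝ => stdGaussCDF (x - ρ)) atBot (nhds 0) :=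
    tendsto_cdf_atBot.comp (tendsto_atBot_add_const_right _ _ tendsto_id)
  have hFlim : Tendsto F atBot (nhds 0) := by
    have := ((tendsto_cdf_atBot.const_mul A).add
      (((tendsto_cdf_atBot.const_mul (D / ρ)).sub (t2.div_const ρ)).const_mul B))
    rw [hF]
    simpa only [mul_zero, zero_div, sub_zero, add_zero] using this
  -- apply FTC
  have hFTC := integral_Iic_of_hasDerivAt_of_tendsto' (a := h)
    (fun x _ => hderiv x) hf_int hFlim
  rw [show (∫ x₀ in Set.Iic h,
        (1 - stdGaussCDF ((h + x₀) / 2 + ((h - x₀) / 2 + ρ))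
          + Real.exp (-2 * ((h - x₀) / 2 + ρ) * ((h + x₀) / 2)) *
              stdGaussCDF ((h + x₀) / 2 - ((h - x₀) / 2 + ρ))) * stdGaussPDF x₀)
      = ∫ x in Set.Iic h,
        (A * stdGaussPDF x + B * (rexp (-ρ * x) * stdGaussCDF (x - ρ))) from by
      exact setIntegral_congr_fun measurableSet_Iic fun x _ => hint x,
    hFTC]
  -- final algebra
  have I3 : B * D = stdGaussPDF (h + ρ) := by
    have e1 : rexp (-h ^ 2 / 2) * rexp (-ρ * h) * rexp (-ρ ^ 2 / 2)
        = rexp (-(h + ρ) ^ 2 / 2) := by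
      rw [← Real.exp_add, ← Real.exp_add]; congr 1; ring
    simp only [hB, hD, stdGaussPDF]
    linear_combination c * e1
  have I4 : B * rexp (-ρ * h) = stdGaussPDF h * rexp (-2 * h * ρ) := by
    have e1 : rexp (-ρ * h) * rexp (-ρ * h) = rexp (-2 * h * ρ) := by
      rw [← Real.exp_add]; congr 1; ring
    simp only [hB]
    linear_combination stdGaussPDF h * e1
  simp only [hF]
  rw [← I3, ← I4]
  field_simp
  ring
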